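/- Fix ρ ∈ (0,1), a unit vector ω' = (ω₁, ω₂) ∈ ℝ², q ∈ C_c^∞(ℝ²) with supp q ⊂ {|z'| < 1}, and integers d ≥ 0 and b ≥ 0. For N ≥ 1 define W_N(y) := e^{iN(y₁ω₁ + y₂ω₂)} e^{−N y₃} (N y₃)^d q(N^{1−ρ} y₁, N^{1−ρ} y₂). Then there exists a constant C > 0, independent of N, such that for every N ≥ 1 and every l ∈ {1,2,3}, ( ∫_{Ω_N} y₃^{2b} |∂W_N/∂y_l (y)|² dy )^{1/2} ≤ C N^{−1/2 + ρ − b}. -/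

import Mathlib

open MeasureTheory

/-- The slab `Ω_N = {y : |y₁| ≤ N^{ρ−1}, |y₂| ≤ N^{ρ−1}, 0 ≤ y₃ ≤ N^{−1/2}}`. -/
def slab (ρ : ℝ) (N : ℕ) : Set (Fin 3 → ℝ) :=
  {y : Fin 3 → ℝ | |y 0| ≤ (N : ℝ) ^ (ρ - 1) ∧ |y 1| ≤ (N : ℝ) ^ (ρ - 1) ∧
    0 ≤ y 2 ∧ y 2 ≤ (N : ℝ) ^ (-(1 : ℝ) / 2)}

open Real

section Aux

lemma aux_pow_exp (m : ℕ) {t : ℝ} (ht : 0 ≤ t) : t ^ m * rexp (-t) ≤ m.factorial := by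
  have h := Real.pow_div_factorial_le_exp t ht m
  have hf : (0:ℝ) < m.factorial := by exact_mod_cast m.factorial_pos
  rw [div_le_iff₀ hf] at h
  rw [Real.exp_neg]
  rw [mul_inv_le_iff₀ (Real.exp_pos t)]
  linarith [h, Real.exp_pos t]

lemma aux_sq_bound (c1 c2 n y2 : ℝ) (hc1 : 0 ≤ c1) (hc2 : 0 ≤ c2) (hn : 1 ≤ n)
    (hy : 0 ≤ y2) (b d : ℕ) :
    y2 ^ (2*b) * (n * rexp (-(n*y2)) * (c1 * (n*y2)^d + c2 * (n*y2)^(d-1)))^2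
      ≤ n ^ ((2:ℝ) - 2*b) * (2*(c1^2+c2^2) * ((2*b+2*d).factorial : ℝ)) * rexp (-(n*y2)) := by
  have hn0 : (0:ℝ) < n := lt_of_lt_of_le one_pos hn
  set t : ℝ := n * y2 with hts
  have ht : 0 ≤ t := by positivity
  set e : ℝ := rexp (-t) with hes
  have he : 0 ≤ e := (Real.exp_pos _).le
  set F : ℝ := ((2*b+2*d).factorial : ℝ) with hFs
  have h1 : t^(2*b+2*d) * e ≤ F := aux_pow_exp _ ht
  have h2 : t^(2*b+2*(d-1)) * e ≤ F := by
    calc t^(2*b+2*(d-1)) * e ≤ ((2*b+2*(d-1)).factorial : ℝ) := aux_pow_exp _ ht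
      _ ≤ F := by rw [hFs]; exact_mod_cast Nat.factorial_le (by omega : 2*b+2*(d-1) ≤ 2*b+2*d)
  have hinner : t^(2*b) * e * (c1 * t^d + c2 * t^(d-1))^2 ≤ 2*(c1^2+c2^2) * F := by
    have step1 : t^(2*b) * e * (c1 * t^d + c2 * t^(d-1))^2
        ≤ t^(2*b) * e * (2*(c1*t^d)^2 + 2*(c2*t^(d-1))^2) := by
      have hnn : 0 ≤ t^(2*b) * e := by positivity
      have : (c1 * t^d + c2 * t^(d-1))^2 ≤ 2*(c1*t^d)^2 + 2*(c2*t^(d-1))^2 := by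
        nlinarith [sq_nonneg (c1*t^d - c2*t^(d-1))]
      exact mul_le_mul_of_nonneg_left this hnn
    have step2 : t^(2*b) * e * (2*(c1*t^d)^2 + 2*(c2*t^(d-1))^2)
        = 2*c1^2 * (t^(2*b+2*d) * e) + 2*c2^2 * (t^(2*b+2*(d-1)) * e) := by ring
    calc t^(2*b) * e * (c1 * t^d + c2 * t^(d-1))^2
        ≤ 2*c1^2 * (t^(2*b+2*d) * e) + 2*c2^2 * (t^(2*b+2*(d-1)) * e) := by
          rw [← step2]; exact step1
      _ ≤ 2*c1^2 * F + 2*c2^2 * F := by gcongr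
      _ = 2*(c1^2+c2^2) * F := by ring
  have hrw : n ^ ((2:ℝ) - 2*(b:ℝ)) = n^2 / n^(2*b) := by
    rw [Real.rpow_sub hn0]
    congr 1
    · rw [show ((2:ℝ)) = ((2:ℕ):ℝ) by norm_num, Real.rpow_natCast]
    · rw [show (2*(b:ℝ)) = ((2*b:ℕ):ℝ) by push_cast; ring, Real.rpow_natCast]
  have hy2t : y2 = t / n := by rw [hts]; field_simp
  calc y2 ^ (2*b) * (n * e * (c1 * t^d + c2 * t^(d-1)))^2
      = (n^2 / n^(2*b)) * (t^(2*b) * e * (c1 * t^d + c2 * t^(d-1))^2 * e) := by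
        rw [hy2t, div_pow]
        field_simp
    _ ≤ (n^2 / n^(2*b)) * (2*(c1^2+c2^2) * F * e) := by
        have hfrac : 0 ≤ n^2 / n^(2*b) := by positivity
        exact mul_le_mul_of_nonneg_left (mul_le_mul_of_nonneg_right hinner he) hfrac
    _ = n ^ ((2:ℝ) - 2*(b:ℝ)) * (2*(c1^2+c2^2) * F) * e := by rw [hrw]; ring

noncomputable def pr3 (i : Fin 3) : (Fin 3 → ℝ) →L[ℝ] ℝ := ContinuousLinearMap.proj i

lemma slab_eq (ρ : ℝ) (N : ℕ) :
    slab ρ N = Set.Icc (![-((N : ℝ) ^ (ρ - 1)), -((N : ℝ) ^ (ρ - 1)), 0])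
      (![(N : ℝ) ^ (ρ - 1), (N : ℝ) ^ (ρ - 1), (N : ℝ) ^ (-(1 : ℝ) / 2)]) := by
  ext y
  simp only [slab, Set.mem_setOf_eq, Set.mem_Icc, Pi.le_def, abs_le]
  constructor
  · rintro ⟨⟨h1a, h1b⟩, ⟨h2a, h2b⟩, h3a, h3b⟩
    constructor <;> intro i <;> fin_cases i <;> simp_all
  · rintro ⟨hA, hB⟩
    exact ⟨⟨by simpa using hA 0, by simpa using hB 0⟩, ⟨by simpa using hA 1, by simpa using hB 1⟩,
      by simpa using hA 2, by simpa using hB 2⟩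

lemma box_integral_le (n r s : ℝ) (hn : 0 < n) (hr : 0 ≤ r) (hs : 0 ≤ s) :
    ∫ y : Fin 3 → ℝ in Set.Icc ![-r, -r, 0] ![r, r, s], rexp (-n * y 2)
      ≤ (2*r) * (2*r) * (1/n) := by
  set A : Fin 3 → ℝ := ![-r, -r, 0] with hA
  set B : Fin 3 → ℝ := ![r, r, s] with hB
  have hiff : ∀ y : Fin 3 → ℝ, y ∈ Set.Icc A B ↔
      (y 0 ∈ Set.Icc (-r) r ∧ y 1 ∈ Set.Icc (-r) r ∧ y 2 ∈ Set.Icc (0:ℝ) s) := by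
    intro y
    simp only [Set.mem_Icc, Pi.le_def]
    constructor
    · rintro ⟨hA', hB'⟩
      exact ⟨⟨by simpa [hA] using hA' 0, by simpa [hB] using hB' 0⟩,
        ⟨by simpa [hA] using hA' 1, by simpa [hB] using hB' 1⟩,
        by simpa [hA] using hA' 2, by simpa [hB] using hB' 2⟩
    · rintro ⟨⟨h1a, h1b⟩, ⟨h2a, h2b⟩, h3a, h3b⟩
      constructor <;> intro i <;> fin_cases i <;> simp [hA, hB] <;> assumption
  set G : Fin 3 → ℝ → ℝ := ![Set.indicator (Set.Icc (-r) r) (fun _ => (1:ℝ)),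
    Set.indicator (Set.Icc (-r) r) (fun _ => (1:ℝ)),
    Set.indicator (Set.Icc (0:ℝ) s) (fun x => rexp (-n * x))] with hG
  have step1 : ∫ y : Fin 3 → ℝ in Set.Icc A B, rexp (-n * y 2)
      = ∫ y : Fin 3 → ℝ, ∏ i, G i (y i) := by
    rw [← integral_indicator measurableSet_Icc]
    congr 1
    funext y
    rw [Fin.prod_univ_three]
    simp only [hG, Matrix.cons_val_zero, Matrix.cons_val_one, Matrix.head_cons,
      Matrix.cons_val_two, Matrix.tail_cons]
    by_cases h0 : y 0 ∈ Set.Icc (-r) r <;>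
      by_cases h1 : y 1 ∈ Set.Icc (-r) r <;>
      by_cases h2 : y 2 ∈ Set.Icc (0:ℝ) s <;>
      simp [Set.indicator, h0, h1, h2, hiff y]
  have step2 : ∫ y : Fin 3 → ℝ, ∏ i, G i (y i) = ∏ i, ∫ x : ℝ, G i x :=
    MeasureTheory.integral_fintype_prod_volume_eq_prod G
  have hi1 : ∫ x : ℝ, Set.indicator (Set.Icc (-r) r) (fun _ => (1:ℝ)) x = 2 * r := by
    rw [integral_indicator measurableSet_Icc, setIntegral_const, MeasureTheory.measureReal_def, Real.volume_Icc, smul_eq_mul,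
      mul_one, ENNReal.toReal_ofReal (by linarith)]
    ring
  have hi3 : ∫ x : ℝ, Set.indicator (Set.Icc (0:ℝ) s) (fun x => rexp (-n * x)) x ≤ 1/n := by
    rw [integral_indicator measurableSet_Icc]
    have hInt : IntegrableOn (fun x : ℝ => rexp (-n * x)) (Set.Ioi (0:ℝ)) :=
      exp_neg_integrableOn_Ioi 0 hn
    have hmono : ∫ x in Set.Icc (0:ℝ) s, rexp (-n*x) ≤ ∫ x in Set.Ioi (0:ℝ), rexp (-n*x) := by
      apply setIntegral_mono_set hInt
      · exact Filter.Eventually.of_forall fun x => (Real.exp_pos _).le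
      · rw [MeasureTheory.ae_le_set]
        refine measure_mono_null ?_ (measure_singleton (0:ℝ))
        intro x hx
        simp only [Set.mem_diff, Set.mem_Icc, Set.mem_Ioi, not_lt, Set.mem_singleton_iff] at hx ⊢
        linarith [hx.1.1, hx.2]
    have hval : ∫ x in Set.Ioi (0:ℝ), rexp (-n * x) = 1/n := by
      have h := integral_comp_mul_left_Ioi (fun x => rexp (-x)) 0 hn
      simp only [mul_zero, integral_exp_neg_Ioi, neg_zero, Real.exp_zero, smul_eq_mul,
        mul_one] at h
      rw [show (fun x : ℝ => rexp (-n * x)) = fun x : ℝ => rexp (-(n * x)) by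
        funext x; ring_nf]
      rw [h]
      rw [one_div]
    linarith
  calc ∫ y : Fin 3 → ℝ in Set.Icc A B, rexp (-n * y 2)
      = (∫ x : ℝ, G 0 x) * (∫ x : ℝ, G 1 x) * (∫ x : ℝ, G 2 x) := by
        rw [step1, step2, Fin.prod_univ_three]
    _ ≤ (2*r) * (2*r) * (1/n) := by
        have e0 : ∫ x : ℝ, G 0 x = 2 * r := by
          simpa only [hG, Matrix.cons_val_zero] using hi1
        have e1 : ∫ x : ℝ, G 1 x = 2 * r := by
          simpa only [hG, Matrix.cons_val_one, Matrix.head_cons, Matrix.cons_val_zero] using hi1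
        have e2 : ∫ x : ℝ, G 2 x ≤ 1/n := by
          simpa only [hG, Matrix.cons_val_two, Matrix.tail_cons, Matrix.head_cons] using hi3
        rw [e0, e1]
        exact mul_le_mul_of_nonneg_left e2 (by positivity)

lemma W_contDiff (ρ ω1 ω2 : ℝ) (q : (Fin 2 → ℝ) → ℝ) (hq : ContDiff ℝ (⊤ : ℕ∞) q) (N d : ℕ) :
    ContDiff ℝ (⊤ : ℕ∞) (fun y : Fin 3 → ℝ =>
      Complex.exp (Complex.I * N * (y 0 * ω1 + y 1 * ω2)) *
        Real.exp (-(N : ℝ) * y 2) * (((N : ℝ) * y 2) ^ d : ℝ) *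
        q (fun i => (N : ℝ) ^ (1 - ρ) * ![y 0, y 1] i)) := by
  have hOR : ContDiff ℝ (⊤ : ℕ∞) (fun x : ℝ => (x : ℂ)) := Complex.ofRealCLM.contDiff
  have h1 : ContDiff ℝ (⊤ : ℕ∞) (fun y : Fin 3 → ℝ =>
      Complex.I * N * ((y 0 : ℝ) * (ω1:ℝ) + (y 1 : ℝ) * (ω2:ℝ) : ℂ)) := by
    have p0 : ContDiff ℝ (⊤ : ℕ∞) (fun y : Fin 3 → ℝ => ((y 0 : ℝ) : ℂ)) :=
      hOR.comp (by fun_prop)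
    have p1 : ContDiff ℝ (⊤ : ℕ∞) (fun y : Fin 3 → ℝ => ((y 1 : ℝ) : ℂ)) :=
      hOR.comp (by fun_prop)
    exact contDiff_const.mul ((p0.mul contDiff_const).add (p1.mul contDiff_const))
  have h1e := Complex.contDiff_exp.comp h1
  have h2 : ContDiff ℝ (⊤ : ℕ∞) (fun y : Fin 3 → ℝ => ((Real.exp (-(N : ℝ) * y 2) : ℝ) : ℂ)) :=
    hOR.comp (by fun_prop)
  have h3 : ContDiff ℝ (⊤ : ℕ∞) (fun y : Fin 3 → ℝ => ((((N : ℝ) * y 2) ^ d : ℝ) : ℂ)) :=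
    hOR.comp (by fun_prop)
  have hfe : (fun y : Fin 3 → ℝ => q (fun i => (N : ℝ) ^ (1 - ρ) * ![y 0, y 1] i))
      = fun y => q (fun i : Fin 2 => (N : ℝ) ^ (1 - ρ) * y ⟨i.1, by omega⟩) := by
    funext y; congr 1; funext i; fin_cases i <;> rfl
  have h4 : ContDiff ℝ (⊤ : ℕ∞) (fun y : Fin 3 → ℝ =>
      ((q (fun i => (N : ℝ) ^ (1 - ρ) * ![y 0, y 1] i) : ℝ) : ℂ)) := by
    refine hOR.comp ?_
    rw [hfe]
    fun_prop
  exact ((h1e.mul h2).mul h3).mul h4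

lemma key_deriv_bound (ρ ω1 ω2 : ℝ) (q : (Fin 2 → ℝ) → ℝ) (hq : ContDiff ℝ (⊤ : ℕ∞) q)
    (M0 M1 : ℝ) (hM0 : ∀ z, |q z| ≤ M0) (hM1 : ∀ z, ‖fderiv ℝ q z‖ ≤ M1)
    (N : ℕ) (d : ℕ) (hN : 1 ≤ N) (hρ : 0 < ρ)
    (hω1 : |ω1| ≤ 1) (hω2 : |ω2| ≤ 1)
    (y : Fin 3 → ℝ) (hy : 0 ≤ y 2) (v : Fin 3 → ℝ) (hv : ∀ i, |v i| ≤ 1) :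
    ‖fderiv ℝ (fun y : Fin 3 → ℝ =>
      Complex.exp (Complex.I * N * (y 0 * ω1 + y 1 * ω2)) *
        Real.exp (-(N : ℝ) * y 2) * (((N : ℝ) * y 2) ^ d : ℝ) *
        q (fun i => (N : ℝ) ^ (1 - ρ) * ![y 0, y 1] i)) y v‖ ≤
      (N:ℝ) * Real.exp (-((N:ℝ) * y 2)) *
        ((3*M0+M1) * ((N:ℝ)*y 2)^d + d * M0 * ((N:ℝ)*y 2)^(d-1)) := by
  set u : (Fin 3 → ℝ) →L[ℝ] (Fin 2 → ℝ) :=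
    ContinuousLinearMap.pi (fun i : Fin 2 => ((N:ℝ) ^ (1-ρ)) • pr3 ⟨i.1, by omega⟩) with hu
  have ha : HasFDerivAt (fun y : Fin 3 → ℝ => ((y 0 : ℝ) : ℂ))
      (Complex.ofRealCLM.comp (pr3 0)) y := (Complex.ofRealCLM.comp (pr3 0)).hasFDerivAt
  have hb : HasFDerivAt (fun y : Fin 3 → ℝ => ((y 1 : ℝ) : ℂ))
      (Complex.ofRealCLM.comp (pr3 1)) y := (Complex.ofRealCLM.comp (pr3 1)).hasFDerivAt
  have h1 := (((ha.mul_const (ω1:ℂ)).add (hb.mul_const (ω2:ℂ))).const_mul (Complex.I * N)).cexp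
  have hr2 : HasFDerivAt (fun y : Fin 3 → ℝ => -(N : ℝ) * y 2) ((-(N:ℝ)) • pr3 2) y :=
    (pr3 2).hasFDerivAt.const_mul (-(N:ℝ))
  have h2 := Complex.ofRealCLM.hasFDerivAt.comp y hr2.exp
  have hr3 : HasFDerivAt (fun y : Fin 3 → ℝ => (N : ℝ) * y 2) ((N:ℝ) • pr3 2) y :=
    (pr3 2).hasFDerivAt.const_mul (N:ℝ)
  have hr3d : HasFDerivAt (fun y : Fin 3 → ℝ => ((N : ℝ) * y 2) ^ d)
      (((d:ℝ) * ((N:ℝ) * y 2) ^ (d-1)) • ((N:ℝ) • pr3 2)) y := by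
    simpa [Function.comp_def] using (hasDerivAt_pow d ((N:ℝ) * y 2)).comp_hasFDerivAt y hr3
  have h3 := Complex.ofRealCLM.hasFDerivAt.comp y hr3d
  have hd : HasFDerivAt (fun y : Fin 3 → ℝ => q (u y)) ((fderiv ℝ q (u y)).comp u) y := by
    have := ((hq.differentiable (by simp) (u y)).hasFDerivAt).comp y
      u.hasFDerivAt
    simpa [Function.comp_def] using this
  have h4 := Complex.ofRealCLM.hasFDerivAt.comp y hd
  have H := ((h1.mul h2).mul h3).mul h4
  simp only [Function.comp_def, Complex.ofRealCLM_apply] at H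
  have hqe : (fun y : Fin 3 → ℝ =>
      Complex.exp (Complex.I * N * (y 0 * ω1 + y 1 * ω2)) *
        Real.exp (-(N : ℝ) * y 2) * (((N : ℝ) * y 2) ^ d : ℝ) *
        q (fun i => (N : ℝ) ^ (1 - ρ) * ![y 0, y 1] i)) =
      (fun y : Fin 3 → ℝ =>
      Complex.exp (Complex.I * N * (y 0 * ω1 + y 1 * ω2)) *
        Real.exp (-(N : ℝ) * y 2) * (((N : ℝ) * y 2) ^ d : ℝ) * (q (u y) : ℝ)) := by
    funext z
    congr 2
    norm_cast
    congr 1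
    funext i; fin_cases i <;> simp [hu, pr3]
  have H' : HasFDerivAt (fun y : Fin 3 → ℝ =>
      Complex.exp (Complex.I * N * (y 0 * ω1 + y 1 * ω2)) *
        Real.exp (-(N : ℝ) * y 2) * (((N : ℝ) * y 2) ^ d : ℝ) * (q (u y) : ℝ)) _ y := H
  rw [hqe, H'.fderiv]
  simp only [ContinuousLinearMap.add_apply, ContinuousLinearMap.coe_smul', Pi.smul_apply,
    ContinuousLinearMap.comp_apply, ContinuousLinearMap.smul_apply,
    ContinuousLinearMap.proj_apply, Complex.ofRealCLM_apply, smul_eq_mul, pr3]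
  have hN0 : (0:ℝ) ≤ N := by positivity
  have ht0 : (0:ℝ) ≤ (N:ℝ) * y 2 := by positivity
  have hr0 : (0:ℝ) < rexp (-(N:ℝ) * y 2) := Real.exp_pos _
  have hM0' : (0:ℝ) ≤ M0 := le_trans (abs_nonneg _) (hM0 0)
  have hM1' : (0:ℝ) ≤ M1 := le_trans (norm_nonneg _) (hM1 0)
  have hEre : (Complex.I * (N:ℂ) * ((y 0 : ℝ) * (ω1:ℝ) + (y 1 : ℝ) * (ω2:ℝ) : ℂ)).re = 0 := by
    simp [Complex.mul_re, Complex.mul_im]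
  have hE : ‖Complex.exp (Complex.I * (N:ℂ) * ((y 0 : ℝ) * (ω1:ℝ) + (y 1 : ℝ) * (ω2:ℝ)))‖ = 1 := by
    rw [Complex.norm_exp, hEre, Real.exp_zero]
  set t : ℝ := (N:ℝ) * y 2 with hts
  set r : ℝ := rexp (-(N:ℝ) * y 2) with hrs
  have hNrpow : (N:ℝ) ^ ((1:ℝ) - ρ) ≤ (N:ℝ) := by
    calc (N:ℝ)^((1:ℝ)-ρ) ≤ (N:ℝ)^(1:ℝ) :=
          Real.rpow_le_rpow_of_exponent_le (by exact_mod_cast hN) (by linarith)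
      _ = (N:ℝ) := Real.rpow_one _
  have huv : ‖u v‖ ≤ (N:ℝ) ^ ((1:ℝ) - ρ) := by
    rw [pi_norm_le_iff_of_nonneg (by positivity)]
    intro i
    simp only [hu, ContinuousLinearMap.pi_apply, ContinuousLinearMap.smul_apply, pr3,
      ContinuousLinearMap.proj_apply, Real.norm_eq_abs, smul_eq_mul, abs_mul]
    calc |(N:ℝ) ^ ((1:ℝ) - ρ)| * |v ⟨(i:ℕ), by omega⟩| ≤ |(N:ℝ) ^ ((1:ℝ) - ρ)| * 1 := by
          gcongr; exact hv _
      _ = (N:ℝ) ^ ((1:ℝ) - ρ) := by rw [mul_one, abs_of_nonneg (by positivity)]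
  have hX4 : |(fderiv ℝ q (u y)) (u v)| ≤ M1 * (N:ℝ) := by
    calc |(fderiv ℝ q (u y)) (u v)| ≤ ‖fderiv ℝ q (u y)‖ * ‖u v‖ := by
          rw [← Real.norm_eq_abs]; exact (fderiv ℝ q (u y)).le_opNorm (u v)
      _ ≤ M1 * (N:ℝ) := mul_le_mul (hM1 _) (le_trans huv hNrpow) (norm_nonneg _) hM1'
  have hw : ((ω1:ℂ) * ((v 0 : ℝ):ℂ) + (ω2:ℂ) * ((v 1 : ℝ):ℂ)) = ((ω1 * v 0 + ω2 * v 1 : ℝ):ℂ) := by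
    push_cast; ring
  have hwabs : |ω1 * v 0 + ω2 * v 1| ≤ 2 := by
    calc |ω1 * v 0 + ω2 * v 1| ≤ |ω1 * v 0| + |ω2 * v 1| := abs_add_le _ _
      _ ≤ 1 * 1 + 1 * 1 := by
          rw [abs_mul, abs_mul]
          gcongr <;> first | exact hω1 | exact hω2 | exact hv _
      _ = 2 := by norm_num
  have hinner : ‖Complex.I * (N:ℂ) * ((ω1:ℂ) * ((v 0 : ℝ):ℂ) + (ω2:ℂ) * ((v 1 : ℝ):ℂ))‖ ≤ 2 * N := by
    rw [hw, norm_mul, norm_mul, Complex.norm_I, Complex.norm_natCast, Complex.norm_real,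
      Real.norm_eq_abs, one_mul]
    calc (N:ℝ) * |ω1 * v 0 + ω2 * v 1| ≤ (N:ℝ) * 2 := by gcongr
      _ = 2 * N := by ring
  have hD : ‖Complex.exp (Complex.I * (N:ℂ) * ((y 0 : ℝ) * (ω1:ℝ) + (y 1 : ℝ) * (ω2:ℝ))) *
      ((r * (-(N:ℝ) * v 2) : ℝ):ℂ) +
      ((r:ℝ):ℂ) * (Complex.exp (Complex.I * (N:ℂ) * ((y 0 : ℝ) * (ω1:ℝ) + (y 1 : ℝ) * (ω2:ℝ))) *
        (Complex.I * (N:ℂ) * ((ω1:ℂ) * ((v 0 : ℝ):ℂ) + (ω2:ℂ) * ((v 1 : ℝ):ℂ))))‖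
      ≤ r * (3 * N) := by
    calc _ ≤ ‖Complex.exp (Complex.I * (N:ℂ) * ((y 0 : ℝ) * (ω1:ℝ) + (y 1 : ℝ) * (ω2:ℝ))) *
        ((r * (-(N:ℝ) * v 2) : ℝ):ℂ)‖ +
        ‖((r:ℝ):ℂ) * (Complex.exp (Complex.I * (N:ℂ) * ((y 0 : ℝ) * (ω1:ℝ) + (y 1 : ℝ) * (ω2:ℝ))) *
          (Complex.I * (N:ℂ) * ((ω1:ℂ) * ((v 0 : ℝ):ℂ) + (ω2:ℂ) * ((v 1 : ℝ):ℂ))))‖ :=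
            norm_add_le _ _
      _ = |r * (-(N:ℝ) * v 2)| +
          r * ‖Complex.I * (N:ℂ) * ((ω1:ℂ) * ((v 0 : ℝ):ℂ) + (ω2:ℂ) * ((v 1 : ℝ):ℂ))‖ := by
          rw [norm_mul, norm_mul, hE, norm_mul, hE, one_mul, one_mul, Complex.norm_real,
            Complex.norm_real, Real.norm_eq_abs, Real.norm_eq_abs, abs_of_pos hr0]
      _ ≤ r * N + r * (2 * N) := by
          gcongr
          rw [abs_mul, abs_mul, abs_neg, abs_of_pos hr0, abs_of_nonneg hN0]
          calc r * ((N:ℝ) * |v 2|) ≤ r * ((N:ℝ) * 1) := by gcongr; exact hv _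
            _ = r * N := by ring
      _ = r * (3 * N) := by ring
  have hX3 : |(d:ℝ) * t ^ (d-1) * ((N:ℝ) * v 2)| ≤ (d:ℝ) * t ^ (d-1) * N := by
    rw [abs_mul, abs_mul, abs_mul, abs_of_nonneg (by positivity : (0:ℝ) ≤ (d:ℝ)),
      abs_of_nonneg (pow_nonneg ht0 _), abs_of_nonneg hN0]
    calc (d:ℝ) * t ^ (d-1) * ((N:ℝ) * |v 2|) ≤ (d:ℝ) * t ^ (d-1) * ((N:ℝ) * 1) := by
          gcongr
          exact hv _
      _ = (d:ℝ) * t ^ (d-1) * N := by ring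
  calc _ ≤ ‖Complex.exp (Complex.I * (N:ℂ) * ((y 0 : ℝ) * (ω1:ℝ) + (y 1 : ℝ) * (ω2:ℝ))) *
        ((r:ℝ):ℂ) * ((t ^ d : ℝ):ℂ) *
        (((fderiv ℝ q (u y)) (u v) : ℝ):ℂ)‖ +
        ‖((q (u y) : ℝ):ℂ) *
          (Complex.exp (Complex.I * (N:ℂ) * ((y 0 : ℝ) * (ω1:ℝ) + (y 1 : ℝ) * (ω2:ℝ))) *
              ((r:ℝ):ℂ) *
              (((d:ℝ) * t ^ (d - 1) * ((N:ℝ) * v 2) : ℝ):ℂ) +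
            ((t ^ d : ℝ):ℂ) *
              (Complex.exp (Complex.I * (N:ℂ) * ((y 0 : ℝ) * (ω1:ℝ) + (y 1 : ℝ) * (ω2:ℝ))) *
                ((r * (-(N:ℝ) * v 2) : ℝ):ℂ) +
                ((r:ℝ):ℂ) *
                  (Complex.exp (Complex.I * (N:ℂ) * ((y 0 : ℝ) * (ω1:ℝ) + (y 1 : ℝ) * (ω2:ℝ))) *
                    (Complex.I * (N:ℂ) *
                      ((ω1:ℂ) * ((v 0 : ℝ):ℂ) + (ω2:ℂ) * ((v 1 : ℝ):ℂ))))))‖ := norm_add_le _ _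
    _ ≤ r * t ^ d * (M1 * N) + M0 * (r * ((d:ℝ) * t ^ (d-1) * N) + t ^ d * (r * (3 * N))) := by
        gcongr ?_ + ?_
        · rw [norm_mul, norm_mul, norm_mul, hE, one_mul, Complex.norm_real, Complex.norm_real,
            Complex.norm_real, Real.norm_eq_abs, Real.norm_eq_abs, Real.norm_eq_abs,
            abs_of_pos hr0, abs_of_nonneg (pow_nonneg ht0 _)]
          gcongr
        · rw [norm_mul, Complex.norm_real, Real.norm_eq_abs]
          refine mul_le_mul (hM0 _) ?_ (norm_nonneg _) hM0'
          calc _ ≤ ‖Complex.exp (Complex.I * (N:ℂ) * ((y 0 : ℝ) * (ω1:ℝ) + (y 1 : ℝ) * (ω2:ℝ))) *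
              ((r:ℝ):ℂ) *
              (((d:ℝ) * t ^ (d - 1) * ((N:ℝ) * v 2) : ℝ):ℂ)‖ +
              ‖((t ^ d : ℝ):ℂ) *
              (Complex.exp (Complex.I * (N:ℂ) * ((y 0 : ℝ) * (ω1:ℝ) + (y 1 : ℝ) * (ω2:ℝ))) *
                ((r * (-(N:ℝ) * v 2) : ℝ):ℂ) +
                ((r:ℝ):ℂ) *
                  (Complex.exp (Complex.I * (N:ℂ) * ((y 0 : ℝ) * (ω1:ℝ) + (y 1 : ℝ) * (ω2:ℝ))) *
                    (Complex.I * (N:ℂ) *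
                      ((ω1:ℂ) * ((v 0 : ℝ):ℂ) + (ω2:ℂ) * ((v 1 : ℝ):ℂ)))))‖ := norm_add_le _ _
            _ ≤ r * ((d:ℝ) * t ^ (d-1) * N) + t ^ d * (r * (3 * N)) := by
                gcongr ?_ + ?_
                · rw [norm_mul, norm_mul, hE, one_mul, Complex.norm_real, Complex.norm_real,
                    Real.norm_eq_abs, Real.norm_eq_abs, abs_of_pos hr0]
                  gcongr
                · rw [norm_mul, Complex.norm_real, Real.norm_eq_abs,
                    abs_of_nonneg (pow_nonneg ht0 _)]
                  gcongr
    _ = (N:ℝ) * r * ((3 * M0 + M1) * t ^ d + (d:ℝ) * M0 * t ^ (d-1)) := by ring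
    _ = (N:ℝ) * rexp (-((N:ℝ) * y 2)) *
        ((3 * M0 + M1) * ((N:ℝ) * y 2) ^ d + (d:ℝ) * M0 * ((N:ℝ) * y 2) ^ (d-1)) := by
        rw [hrs, hts, neg_mul]

end Aux

/-- Weighted `L²(Ω_N)` bound for the first derivatives of the oscillating profile
`W_N(y) = e^{iN y'·ω'} e^{−Ny₃} (Ny₃)^d q(N^{1−ρ} y')`:
`(∫_{Ω_N} y₃^{2b} |∂W_N/∂y_l|² dy)^{1/2} ≤ C N^{−1/2+ρ−b}` with `C` independent of `N`. -/
theorem stmt17 (ρ ω1 ω2 : ℝ) (hρ : 0 < ρ) (hρ1 : ρ < 1) (hω : ω1 ^ 2 + ω2 ^ 2 = 1)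
    (q : (Fin 2 → ℝ) → ℝ) (hq : ContDiff ℝ (⊤ : ℕ∞) q) (hqc : HasCompactSupport q)
    (hqsupp : tsupport q ⊆ Metric.ball (0 : Fin 2 → ℝ) 1)
    (d b : ℕ) :
    ∃ C > 0, ∀ N : ℕ, 1 ≤ N →
      ∀ W : (Fin 3 → ℝ) → ℂ,
        (W = fun y =>
          Complex.exp (Complex.I * N * (y 0 * ω1 + y 1 * ω2)) *
            Real.exp (-(N : ℝ) * y 2) * (((N : ℝ) * y 2) ^ d : ℝ) *
            q (fun i => (N : ℝ) ^ (1 - ρ) * ![y 0, y 1] i)) →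
        ∀ l : Fin 3,
          Real.sqrt (∫ y in slab ρ N, (y 2) ^ (2 * b) * ‖fderiv ℝ W y (Pi.single l 1)‖ ^ 2)
            ≤ C * (N : ℝ) ^ (-(1 : ℝ) / 2 + ρ - b) := by
  obtain ⟨M0, hM0⟩ := hqc.exists_bound_of_continuous hq.continuous
  obtain ⟨M1, hM1⟩ := (hqc.fderiv ℝ).exists_bound_of_continuous
    (hq.continuous_fderiv (by simp))
  simp only [Real.norm_eq_abs] at hM0
  have hM0' : (0:ℝ) ≤ M0 := le_trans (abs_nonneg _) (hM0 0)
  have hM1' : (0:ℝ) ≤ M1 := le_trans (norm_nonneg _) (hM1 0)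
  set c1 : ℝ := 3*M0 + M1 with hc1s
  set c2 : ℝ := (d:ℝ) * M0 with hc2s
  have hc1 : 0 ≤ c1 := by positivity
  have hc2 : 0 ≤ c2 := by positivity
  set K : ℝ := 2*(c1^2+c2^2) * ((2*b+2*d).factorial : ℝ) with hKs
  have hK : 0 ≤ K := by positivity
  have hω1 : |ω1| ≤ 1 := by nlinarith [sq_abs ω1, abs_nonneg ω1, sq_nonneg ω2]
  have hω2 : |ω2| ≤ 1 := by nlinarith [sq_abs ω2, abs_nonneg ω2, sq_nonneg ω1]
  refine ⟨Real.sqrt (4*K) + 1, by positivity, ?_⟩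
  intro N hN W hW l
  subst hW
  have hNpos : (0:ℝ) < N := by exact_mod_cast hN
  have hN1 : (1:ℝ) ≤ N := by exact_mod_cast hN
  set v : Fin 3 → ℝ := Pi.single l 1 with hvs
  have hv : ∀ i, |v i| ≤ 1 := by
    intro i
    rw [hvs, Pi.single_apply]
    split_ifs <;> norm_num
  -- compactness and measurability of the slab
  have hcomp : IsCompact (slab ρ N) := by rw [slab_eq]; exact isCompact_Icc
  have hmeas : MeasurableSet (slab ρ N) := by rw [slab_eq]; exact measurableSet_Icc
  -- continuity of the integrand
  have hWc := W_contDiff ρ ω1 ω2 q hq N d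
  have hfd : Continuous fun y : Fin 3 → ℝ => fderiv ℝ (fun y : Fin 3 → ℝ =>
      Complex.exp (Complex.I * N * (y 0 * ω1 + y 1 * ω2)) *
        Real.exp (-(N : ℝ) * y 2) * (((N : ℝ) * y 2) ^ d : ℝ) *
        q (fun i => (N : ℝ) ^ (1 - ρ) * ![y 0, y 1] i)) y v :=
    (hWc.continuous_fderiv (by simp)).clm_apply continuous_const
  have hcontf : Continuous fun y : Fin 3 → ℝ =>
      (y 2) ^ (2 * b) * ‖fderiv ℝ (fun y : Fin 3 → ℝ =>
      Complex.exp (Complex.I * N * (y 0 * ω1 + y 1 * ω2)) *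
        Real.exp (-(N : ℝ) * y 2) * (((N : ℝ) * y 2) ^ d : ℝ) *
        q (fun i => (N : ℝ) ^ (1 - ρ) * ![y 0, y 1] i)) y v‖ ^ 2 :=
    ((continuous_apply 2).pow _).mul (hfd.norm.pow 2)
  have hcontg : Continuous fun y : Fin 3 → ℝ =>
      (N:ℝ) ^ ((2:ℝ) - 2*(b:ℝ)) * K * rexp (-((N:ℝ) * y 2)) := by fun_prop
  have hIf := hcontf.continuousOn.integrableOn_compact (μ := volume) hcomp
  have hIg := hcontg.continuousOn.integrableOn_compact (μ := volume) hcomp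
  -- pointwise bound on the slab
  have hpt : ∀ y ∈ slab ρ N,
      (y 2) ^ (2 * b) * ‖fderiv ℝ (fun y : Fin 3 → ℝ =>
      Complex.exp (Complex.I * N * (y 0 * ω1 + y 1 * ω2)) *
        Real.exp (-(N : ℝ) * y 2) * (((N : ℝ) * y 2) ^ d : ℝ) *
        q (fun i => (N : ℝ) ^ (1 - ρ) * ![y 0, y 1] i)) y v‖ ^ 2
      ≤ (N:ℝ) ^ ((2:ℝ) - 2*(b:ℝ)) * K * rexp (-((N:ℝ) * y 2)) := by
    intro y hy
    have hy2 : 0 ≤ y 2 := hy.2.2.1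
    have hkb := key_deriv_bound ρ ω1 ω2 q hq M0 M1 hM0 hM1 N d hN hρ hω1 hω2 y hy2 v hv
    have hsq : ‖fderiv ℝ (fun y : Fin 3 → ℝ =>
        Complex.exp (Complex.I * N * (y 0 * ω1 + y 1 * ω2)) *
          Real.exp (-(N : ℝ) * y 2) * (((N : ℝ) * y 2) ^ d : ℝ) *
          q (fun i => (N : ℝ) ^ (1 - ρ) * ![y 0, y 1] i)) y v‖ ^ 2
        ≤ ((N:ℝ) * Real.exp (-((N:ℝ) * y 2)) *
          (c1 * ((N:ℝ) * y 2) ^ d + c2 * ((N:ℝ) * y 2) ^ (d-1))) ^ 2 := by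
      apply pow_le_pow_left₀ (norm_nonneg _)
      calc _ ≤ (N:ℝ) * Real.exp (-((N:ℝ) * y 2)) *
          ((3*M0+M1) * ((N:ℝ)*y 2)^d + d * M0 * ((N:ℝ)*y 2)^(d-1)) := hkb
        _ = _ := by rw [hc1s, hc2s]
    calc (y 2) ^ (2 * b) * ‖fderiv ℝ (fun y : Fin 3 → ℝ =>
        Complex.exp (Complex.I * N * (y 0 * ω1 + y 1 * ω2)) *
          Real.exp (-(N : ℝ) * y 2) * (((N : ℝ) * y 2) ^ d : ℝ) *
          q (fun i => (N : ℝ) ^ (1 - ρ) * ![y 0, y 1] i)) y v‖ ^ 2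
        ≤ (y 2) ^ (2 * b) * ((N:ℝ) * Real.exp (-((N:ℝ) * y 2)) *
          (c1 * ((N:ℝ) * y 2) ^ d + c2 * ((N:ℝ) * y 2) ^ (d-1))) ^ 2 :=
          mul_le_mul_of_nonneg_left hsq (pow_nonneg hy2 _)
      _ ≤ (N:ℝ) ^ ((2:ℝ) - 2*(b:ℝ)) * K * rexp (-((N:ℝ) * y 2)) := by
          have := aux_sq_bound c1 c2 (N:ℝ) (y 2) hc1 hc2 hN1 hy2 b d
          rw [hKs]
          exact this
  -- integral comparison
  have hmono := setIntegral_mono_on hIf hIg hmeas hpt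
  -- compute / bound the right integral
  set rr : ℝ := (N:ℝ) ^ (ρ - 1) with hrrs
  set ss : ℝ := (N:ℝ) ^ (-(1:ℝ) / 2) with hsss
  have hrr : 0 ≤ rr := by positivity
  have hss : 0 ≤ ss := by positivity
  have hbox := box_integral_le (N:ℝ) rr ss hNpos hrr hss
  simp only [neg_mul] at hbox
  have hIexp : Integrable (fun y : Fin 3 → ℝ => rexp (-((N:ℝ) * y 2)))
      (volume.restrict (slab ρ N)) := by
    exact (by fun_prop : Continuous fun y : Fin 3 → ℝ =>
      rexp (-((N:ℝ) * y 2))).continuousOn.integrableOn_compact (μ := volume) hcomp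
  have hgint : ∫ y in slab ρ N, (N:ℝ) ^ ((2:ℝ) - 2*(b:ℝ)) * K * rexp (-((N:ℝ) * y 2))
      ≤ (N:ℝ) ^ ((2:ℝ) - 2*(b:ℝ)) * K * ((2*rr) * (2*rr) * (1/(N:ℝ))) := by
    rw [MeasureTheory.integral_const_mul]
    apply mul_le_mul_of_nonneg_left _ (by positivity)
    calc ∫ y in slab ρ N, rexp (-((N:ℝ) * y 2))
        = ∫ y : Fin 3 → ℝ in Set.Icc ![-rr, -rr, 0] ![rr, rr, ss], rexp (-((N:ℝ) * y 2)) := by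
          rw [slab_eq]
      _ ≤ (2*rr) * (2*rr) * (1/(N:ℝ)) := hbox
  have hchain : ∫ y in slab ρ N, (y 2) ^ (2 * b) * ‖fderiv ℝ (fun y : Fin 3 → ℝ =>
      Complex.exp (Complex.I * N * (y 0 * ω1 + y 1 * ω2)) *
        Real.exp (-(N : ℝ) * y 2) * (((N : ℝ) * y 2) ^ d : ℝ) *
        q (fun i => (N : ℝ) ^ (1 - ρ) * ![y 0, y 1] i)) y v‖ ^ 2
      ≤ 4*K * ((N:ℝ) ^ (-(1:ℝ)/2 + ρ - (b:ℝ)))^2 := by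
    have hval : (N:ℝ) ^ ((2:ℝ) - 2*(b:ℝ)) * K * ((2*rr) * (2*rr) * (1/(N:ℝ)))
        = 4*K * ((N:ℝ) ^ (-(1:ℝ)/2 + ρ - (b:ℝ)))^2 := by
      rw [hrrs, sq, ← Real.rpow_add hNpos,
        show (1:ℝ)/(N:ℝ) = (N:ℝ)^(-1:ℝ) by rw [Real.rpow_neg_one, one_div]]
      calc (N:ℝ) ^ ((2:ℝ) - 2*(b:ℝ)) * K *
            (2*(N:ℝ)^(ρ-1) * (2*(N:ℝ)^(ρ-1)) * (N:ℝ)^(-1:ℝ))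
          = 4*K * ((N:ℝ) ^ ((2:ℝ) - 2*(b:ℝ)) * (N:ℝ)^(ρ-1) * (N:ℝ)^(ρ-1) * (N:ℝ)^(-1:ℝ)) := by
            ring
        _ = 4*K * (N:ℝ) ^ (((2:ℝ) - 2*(b:ℝ)) + (ρ-1) + (ρ-1) + (-1:ℝ)) := by
            rw [← Real.rpow_add hNpos, ← Real.rpow_add hNpos, ← Real.rpow_add hNpos]
        _ = 4*K * (N:ℝ) ^ (-(1:ℝ)/2 + ρ - (b:ℝ) + (-(1:ℝ)/2 + ρ - (b:ℝ))) := by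
            congr 1
            ring
    calc _ ≤ ∫ y in slab ρ N, (N:ℝ) ^ ((2:ℝ) - 2*(b:ℝ)) * K * rexp (-((N:ℝ) * y 2)) := hmono
      _ ≤ (N:ℝ) ^ ((2:ℝ) - 2*(b:ℝ)) * K * ((2*rr) * (2*rr) * (1/(N:ℝ))) := hgint
      _ = 4*K * ((N:ℝ) ^ (-(1:ℝ)/2 + ρ - (b:ℝ)))^2 := hval
  have hsqrt := Real.sqrt_le_sqrt hchain
  calc Real.sqrt (∫ y in slab ρ N, (y 2) ^ (2 * b) * ‖fderiv ℝ (fun y : Fin 3 → ℝ =>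
        Complex.exp (Complex.I * N * (y 0 * ω1 + y 1 * ω2)) *
          Real.exp (-(N : ℝ) * y 2) * (((N : ℝ) * y 2) ^ d : ℝ) *
          q (fun i => (N : ℝ) ^ (1 - ρ) * ![y 0, y 1] i)) y v‖ ^ 2)
      ≤ Real.sqrt (4*K * ((N:ℝ) ^ (-(1:ℝ)/2 + ρ - (b:ℝ)))^2) := hsqrt
    _ = Real.sqrt (4*K) * (N:ℝ) ^ (-(1:ℝ)/2 + ρ - (b:ℝ)) := by
        rw [Real.sqrt_mul (by positivity), Real.sqrt_sq (by positivity)]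
    _ ≤ (Real.sqrt (4*K) + 1) * (N:ℝ) ^ (-(1:ℝ)/2 + ρ - (b:ℝ)) := by
        apply mul_le_mul_of_nonneg_right (by linarith) (by positivity)
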